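/- Let g be an M♮-convex function with finite nonempty effective domain and let b : E → {0,1}. Then for every integer k with k̲ ≤ k ≤ k̄, the set 𝒯_k is nonempty. -/

import Mathlib

open scoped BigOperators

/-- Characteristic vector of a singleton `{u}`. -/
def chiv {E : Type*} [DecidableEq E] (u : E) : E → ℤ := fun e => if e = u then 1 else 0

/-- Characteristic vector allowing the dummy symbol `z` (modelled as `none`), with `χ_z = 0`. -/
def chiOpt {E : Type*} [DecidableEq E] (v : Option E) : E → ℤ :=
  fun e => match v with
  | none => 0
  | some w => chiv w e

/-- M♮-convexity (with nonempty effective domain) for `g : (E → ℤ) → ℝ ∪ {+∞}`. -/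
def MnatConvex {E : Type*} [DecidableEq E] (g : (E → ℤ) → WithTop ℝ) : Prop :=
  (∃ x, g x < ⊤) ∧
  ∀ x y : E → ℤ, g x < ⊤ → g y < ⊤ → ∀ u : E, y u < x u →
    (g (x - chiv u) + g (y + chiv u) ≤ g x + g y) ∨
    (∃ v : E, x v < y v ∧
      g (x - chiv u + chiv v) + g (y + chiv u - chiv v) ≤ g x + g y)

/-- `⟨b,x⟩ = ∑ e, b e * x e`. -/
def innerb {E : Type*} [Fintype E] (b : E → ℤ) (x : E → ℤ) : ℤ := ∑ e, b e * x e

/-- `𝒯_i`: the minimizers of `g` on `𝒫_i = {x ∈ dom g : ⟨b,x⟩ = i}`. -/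
def Tset {E : Type*} [Fintype E] (g : (E → ℤ) → WithTop ℝ) (b : E → ℤ) (i : ℤ) :
    Set (E → ℤ) :=
  {x | g x < ⊤ ∧ innerb b x = i ∧ ∀ y : E → ℤ, g y < ⊤ → innerb b y = i → g x ≤ g y}

/-- A transition `(u,v)` with respect to `x`: `u ∈ E₁`, `v ∈ E₀ ∪ {z}`, and
`x - χ_u + χ_v ∈ dom g`. -/
def IsTransition {E : Type*} [DecidableEq E] (g : (E → ℤ) → WithTop ℝ) (b : E → ℤ)
    (x : E → ℤ) (u : E) (v : Option E) : Prop :=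
  b u = 1 ∧ (∀ w : E, v = some w → b w = 0) ∧ g (x - chiv u + chiOpt v) < ⊤

/-- The cost `g(x;u,v) = g(x - χ_u + χ_v) - g(x)` of a transition (as a real number;
both values are finite for transitions with respect to `x ∈ dom g`). -/
noncomputable def transCost {E : Type*} [DecidableEq E] (g : (E → ℤ) → WithTop ℝ)
    (x : E → ℤ) (u : E) (v : Option E) : ℝ :=
  WithTop.untopD 0 (g (x - chiv u + chiOpt v)) - WithTop.untopD 0 (g x)

/-- A minimum transition with respect to `x`. -/
def IsMinTransition {E : Type*} [Fintype E] [DecidableEq E] (g : (E → ℤ) → WithTop ℝ)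
    (b : E → ℤ) (x : E → ℤ) (u : E) (v : Option E) : Prop :=
  IsTransition g b x u v ∧
    ∀ (u' : E) (v' : Option E), IsTransition g b x u' v' →
      transCost g x u v ≤ transCost g x u' v'


lemma innerb_add_chiv {E : Type*} [Fintype E] [DecidableEq E] (b x : E → ℤ) (u : E) :
    innerb b (x + chiv u) = innerb b x + b u := by
  unfold innerb chiv
  simp [mul_add, Finset.sum_add_distrib, mul_ite, Finset.sum_ite_eq']

lemma innerb_sub_chiv {E : Type*} [Fintype E] [DecidableEq E] (b x : E → ℤ) (u : E) :
    innerb b (x - chiv u) = innerb b x - b u := by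
  unfold innerb chiv
  simp [mul_sub, Finset.sum_sub_distrib, mul_ite, Finset.sum_ite_eq']

lemma reachable {E : Type*} [Fintype E] [DecidableEq E]
    (g : (E → ℤ) → WithTop ℝ) (b : E → ℤ)
    (hg : MnatConvex g) (hb : ∀ e : E, b e = 0 ∨ b e = 1) (k : ℤ) :
    ∀ n : ℕ, ∀ x y : E → ℤ, g x < ⊤ → g y < ⊤ →
      innerb b x ≤ k → k ≤ innerb b y → (∑ e, (y e - x e).natAbs) = n →
      ∃ w, g w < ⊤ ∧ innerb b w = k := by
  intro n
  induction n using Nat.strong_induction_on with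
  | _ n IH =>
    intro x y hx hy hxk hky hsum
    rcases eq_or_lt_of_le hxk with heq | hlt
    · exact ⟨x, hx, heq⟩
    · have hgap : (∑ e, b e * x e) < ∑ e, b e * y e := lt_of_lt_of_le hlt hky
      obtain ⟨u, -, hu⟩ := Finset.exists_lt_of_sum_lt hgap
      have hbu : b u = 1 := (hb u).resolve_left (by intro h; simp [h] at hu)
      have hxu : x u < y u := by rw [hbu, one_mul, one_mul] at hu; exact hu
      obtain ⟨-, hM⟩ := hg
      have hfin2 : g y + g x < ⊤ := WithTop.add_lt_top.2 ⟨hy, hx⟩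
      rcases hM y x hy hx u hxu with h1 | ⟨v, hv, h2⟩
      · set x' := x + chiv u with hx'def
        have hx' : g x' < ⊤ := (WithTop.add_lt_top.1 (lt_of_le_of_lt h1 hfin2)).2
        have hix' : innerb b x' = innerb b x + 1 := by
          rw [hx'def, innerb_add_chiv, hbu]
        have hdec : (∑ e, (y e - x' e).natAbs) < n := by
          rw [← hsum]
          apply Finset.sum_lt_sum
          · intro e _
            by_cases he : e = u <;> simp [hx'def, chiv, he] <;> omega
          · exact ⟨u, Finset.mem_univ u, by simp [hx'def, chiv]; omega⟩
        exact IH _ hdec x' y hx' hy (by omega) hky rfl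
      · set x' := x + chiv u - chiv v with hx'def
        have hx' : g x' < ⊤ := (WithTop.add_lt_top.1 (lt_of_le_of_lt h2 hfin2)).2
        have hix' : innerb b x' = innerb b x + 1 - b v := by
          rw [hx'def, innerb_sub_chiv, innerb_add_chiv, hbu]
        have huv : u ≠ v := by intro h; rw [h] at hxu; omega
        have hbv : 0 ≤ b v := by rcases hb v with h | h <;> omega
        have hdec : (∑ e, (y e - x' e).natAbs) < n := by
          rw [← hsum]
          apply Finset.sum_lt_sum
          · intro e _
            by_cases he : e = u
            · simp [hx'def, chiv, he, huv]; omega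
            · by_cases he2 : e = v <;> simp [hx'def, chiv, he, he2] <;> omega
          · exact ⟨u, Finset.mem_univ u, by simp [hx'def, chiv, huv]; omega⟩
        exact IH _ hdec x' y hx' hy (by omega) hky rfl

/-- for every `k` with `k̲ ≤ k ≤ k̄`, the set `𝒯_k` is nonempty. -/
theorem stmt_0 {E : Type*} [Fintype E] [DecidableEq E] [Nonempty E]
    (g : (E → ℤ) → WithTop ℝ) (b : E → ℤ)
    (hg : MnatConvex g)
    (hfin : {x : E → ℤ | g x < ⊤}.Finite)
    (hb : ∀ e : E, b e = 0 ∨ b e = 1)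
    (kmin kmax : ℤ)
    (hkmin : (Tset g b kmin).Nonempty ∧ ∀ k : ℤ, (Tset g b k).Nonempty → kmin ≤ k)
    (hkmax : (Tset g b kmax).Nonempty ∧ ∀ k : ℤ, (Tset g b k).Nonempty → k ≤ kmax) :
    ∀ k : ℤ, kmin ≤ k → k ≤ kmax → (Tset g b k).Nonempty := by
  intro k hk1 hk2
  obtain ⟨x, hx⟩ := hkmin.1
  obtain ⟨y, hy⟩ := hkmax.1
  obtain ⟨w, hw, hwk⟩ := reachable g b hg hb k _ x y hx.1 hy.1
    (hx.2.1 ▸ hk1) (hy.2.1 ▸ hk2) rfl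
  have hSfin : {z : E → ℤ | g z < ⊤ ∧ innerb b z = k}.Finite :=
    hfin.subset (fun z hz => hz.1)
  obtain ⟨m, hm, hmin⟩ := Set.exists_min_image _ g hSfin ⟨w, hw, hwk⟩
  exact ⟨m, hm.1, hm.2, fun y' hy1 hy2 => hmin y' ⟨hy1, hy2⟩⟩
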